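/- arXiv:1202.2207 — 4 statements merged into one kernel-verified Lean document; each statement's English description precedes it below -/
import Mathlib

section
/- Let f : I ⊆ ℝ₊ → ℝ be differentiable on I°, let a, b ∈ I° with a < b, and suppose f′ is integrable on [a,b]. Let p > 1, q = p/(p−1), and fix s ∈ (0,1]. If |f′|^q is s-convex in the second sense on [a,b], then for every x ∈ [a,b], |((b−x)·f(b) + (x−a)·f(a))/(b−a) − (1/(b−a))·∫_a^b f(u) du| ≤ (1/(1+p))^{1/p}·(1/(s+1))^{1/q}·{ ((x−a)²/(b−a))·(|f′(x)|^q + |f′(a)|^q)^{1/q} + ((b−x)²/(b−a))·(|f′(x)|^q + |f′(b)|^q)^{1/q} }. -/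
open MeasureTheory Set intervalIntegral Real

-- J-computation: ∫ v in 0..L, (v/L)^s dv = L/(s+1) for 0 < L
lemma aux_J {L s : ℝ} (hL : 0 < L) (hs0 : 0 < s) :
    ∫ v in (0:ℝ)..L, (v / L) ^ s = L / (s + 1) := by
  have hLs : (0:ℝ) < L ^ s := Real.rpow_pos_of_pos hL s
  have h1 : ∫ v in (0:ℝ)..L, (v / L) ^ s = ∫ v in (0:ℝ)..L, v ^ s / L ^ s := by
    apply intervalIntegral.integral_congr
    intro v hv
    rw [Set.uIcc_of_le hL.le] at hv
    exact Real.div_rpow hv.1 hL.le s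
  have h2 : ∫ v in (0:ℝ)..L, v ^ s = (L ^ (s + 1) - (0:ℝ) ^ (s + 1)) / (s + 1) :=
    integral_rpow (Or.inl (by linarith))
  rw [h1, intervalIntegral.integral_div, h2, Real.zero_rpow (by positivity),
    Real.rpow_add_one hL.ne' s]
  field_simp
  ring

lemma aux_key {p q s : ℝ} (hpq : p.HolderConjugate q) (hs0 : 0 < s)
    {g : ℝ → ℝ} {c d : ℝ} (hcd : c < d)
    (hg : IntervalIntegrable g volume c d) {A B : ℝ}
    (hbound : ∀ u ∈ Icc c d,
      |g u| ^ q ≤ ((u - c) / (d - c)) ^ s * A + ((d - u) / (d - c)) ^ s * B) :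
    |∫ u in c..d, (d - u) * g u| ≤
      (1 / (1 + p)) ^ (1 / p) * (1 / (s + 1)) ^ (1 / q) * ((d - c) ^ 2 * (A + B) ^ (1 / q)) := by
  have hdc : 0 < d - c := sub_pos.2 hcd
  have hp0 : 0 < p := hpq.pos
  have hq0 : 0 < q := hpq.symm.pos
  have hA : 0 ≤ A := by
    have h := hbound d ⟨hcd.le, le_refl d⟩
    rw [div_self hdc.ne', sub_self, zero_div, Real.one_rpow, Real.zero_rpow hs0.ne',
      one_mul, zero_mul, add_zero] at h
    exact le_trans (Real.rpow_nonneg (abs_nonneg _) q) h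
  have hB : 0 ≤ B := by
    have h := hbound c ⟨le_refl c, hcd.le⟩
    rw [div_self hdc.ne', sub_self, zero_div, Real.one_rpow, Real.zero_rpow hs0.ne',
      one_mul, zero_mul, zero_add] at h
    exact le_trans (Real.rpow_nonneg (abs_nonneg _) q) h
  set μ : Measure ℝ := volume.restrict (Ioc c d) with hμ
  haveI : Fact (volume (Ioc c d) < ⊤) := ⟨measure_Ioc_lt_top⟩
  have hgm : AEStronglyMeasurable g μ := hg.1.aestronglyMeasurable
  -- pointwise bound on |g|
  have hptq : ∀ u ∈ Icc c d, |g u| ^ q ≤ A + B := by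
    intro u hu
    have h1 := hbound u hu
    have ht0 : 0 ≤ (u - c) / (d - c) := div_nonneg (by linarith [hu.1]) hdc.le
    have ht1 : (u - c) / (d - c) ≤ 1 := by rw [div_le_one hdc]; linarith [hu.2]
    have hr0 : 0 ≤ (d - u) / (d - c) := div_nonneg (by linarith [hu.2]) hdc.le
    have hr1 : (d - u) / (d - c) ≤ 1 := by rw [div_le_one hdc]; linarith [hu.1]
    have e1 : ((u - c) / (d - c)) ^ s ≤ 1 := Real.rpow_le_one ht0 ht1 hs0.le
    have e2 : ((d - u) / (d - c)) ^ s ≤ 1 := Real.rpow_le_one hr0 hr1 hs0.le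
    have e3 : 0 ≤ ((u - c) / (d - c)) ^ s := Real.rpow_nonneg ht0 s
    have e4 : 0 ≤ ((d - u) / (d - c)) ^ s := Real.rpow_nonneg hr0 s
    nlinarith
  have hgb : ∀ᵐ u ∂μ, ‖g u‖ ≤ (A + B) ^ (1 / q) := by
    filter_upwards [ae_restrict_mem measurableSet_Ioc] with u hu
    have h2 := hptq u ⟨hu.1.le, hu.2⟩
    have : (|g u| ^ q) ^ (1 / q) ≤ (A + B) ^ (1 / q) :=
      Real.rpow_le_rpow (Real.rpow_nonneg (abs_nonneg _) q) h2 (by positivity)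
    rw [one_div, Real.rpow_rpow_inv (abs_nonneg _) hq0.ne'] at this
    rw [Real.norm_eq_abs, one_div]
    exact this
  have hgLq : MemLp g (ENNReal.ofReal q) μ := MemLp.of_bound hgm _ hgb
  have hwm : MemLp (fun u => d - u) (ENNReal.ofReal p) μ := by
    refine MemLp.of_bound ((continuous_const.sub continuous_id).aestronglyMeasurable) (d - c) ?_
    filter_upwards [ae_restrict_mem measurableSet_Ioc] with u hu
    rw [Real.norm_eq_abs, abs_of_nonneg (by linarith [hu.2])]
    linarith [hu.1]
  have hHolder := integral_mul_norm_le_Lp_mul_Lq hpq hwm hgLq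
  -- step 1: |∫| ≤ ∫ of norms
  have step1 : |∫ u in c..d, (d - u) * g u| ≤ ∫ u, ‖d - u‖ * ‖g u‖ ∂μ := by
    refine le_trans (intervalIntegral.abs_integral_le_integral_abs hcd.le) (le_of_eq ?_)
    rw [intervalIntegral.integral_of_le hcd.le]
    simp only [Real.norm_eq_abs, abs_mul]
    rfl
  -- compute the weight integral
  have hW : ∫ u, ‖d - u‖ ^ p ∂μ = (d - c) ^ (p + 1) / (p + 1) := by
    have e0 : ∫ u, ‖d - u‖ ^ p ∂μ = ∫ u in c..d, ‖d - u‖ ^ p := by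
      rw [intervalIntegral.integral_of_le hcd.le]
    have e1 : ∫ u in c..d, ‖d - u‖ ^ p = ∫ u in c..d, (d - u) ^ p := by
      apply intervalIntegral.integral_congr
      intro u hu
      rw [Set.uIcc_of_le hcd.le] at hu
      simp only [Real.norm_eq_abs]
      rw [abs_of_nonneg (by linarith [hu.2] : (0:ℝ) ≤ d - u)]
    have e2 : ∫ u in c..d, (d - u) ^ p = ∫ v in (d - d)..(d - c), v ^ p :=
      intervalIntegral.integral_comp_sub_left (fun v => v ^ p) d
    have e3 : ∫ v in (0:ℝ)..(d - c), v ^ p = ((d - c) ^ (p + 1) - (0:ℝ) ^ (p + 1)) / (p + 1) :=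
      integral_rpow (Or.inl (by linarith))
    rw [e0, e1, e2, sub_self, e3, Real.zero_rpow (by positivity)]
    ring
  -- bound the |g|^q integral
  have hMnn : 0 ≤ ∫ u, ‖g u‖ ^ q ∂μ :=
    integral_nonneg fun u => Real.rpow_nonneg (norm_nonneg _) q
  have hM : ∫ u, ‖g u‖ ^ q ∂μ ≤ (d - c) * (A + B) / (s + 1) := by
    have hcont : Continuous fun u : ℝ => ((u - c) / (d - c)) ^ s * A + ((d - u) / (d - c)) ^ s * B := by
      have h1 : Continuous fun u : ℝ => (u - c) / (d - c) :=
        (continuous_id.sub continuous_const).div_const _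
      have h2 : Continuous fun u : ℝ => (d - u) / (d - c) :=
        (continuous_const.sub continuous_id).div_const _
      exact (((Real.continuous_rpow_const hs0.le).comp h1).mul continuous_const).add
        (((Real.continuous_rpow_const hs0.le).comp h2).mul continuous_const)
    have hintR : Integrable (fun u => ((u - c) / (d - c)) ^ s * A + ((d - u) / (d - c)) ^ s * B) μ :=
      hcont.integrableOn_Ioc
    have hintL : Integrable (fun u => ‖g u‖ ^ q) μ := by
      have := hgLq.integrable_norm_rpow (by simp [hq0] : ENNReal.ofReal q ≠ 0) ENNReal.ofReal_ne_top
      rwa [ENNReal.toReal_ofReal hq0.le] at this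
    have stepA : ∫ u, ‖g u‖ ^ q ∂μ ≤
        ∫ u, (((u - c) / (d - c)) ^ s * A + ((d - u) / (d - c)) ^ s * B) ∂μ := by
      refine integral_mono_ae hintL hintR ?_
      filter_upwards [ae_restrict_mem measurableSet_Ioc] with u hu
      rw [Real.norm_eq_abs]
      exact hbound u ⟨hu.1.le, hu.2⟩
    have stepB : ∫ u, (((u - c) / (d - c)) ^ s * A + ((d - u) / (d - c)) ^ s * B) ∂μ
        = (d - c) * (A + B) / (s + 1) := by
      have h0 : ∫ u, (((u - c) / (d - c)) ^ s * A + ((d - u) / (d - c)) ^ s * B) ∂μ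
          = ∫ u in c..d, (((u - c) / (d - c)) ^ s * A + ((d - u) / (d - c)) ^ s * B) := by
        rw [intervalIntegral.integral_of_le hcd.le]
      have hi1 : IntervalIntegrable (fun u : ℝ => ((u - c) / (d - c)) ^ s * A) volume c d := by
        apply Continuous.intervalIntegrable
        exact ((Real.continuous_rpow_const hs0.le).comp
          ((continuous_id.sub continuous_const).div_const _)).mul continuous_const
      have hi2 : IntervalIntegrable (fun u : ℝ => ((d - u) / (d - c)) ^ s * B) volume c d := by
        apply Continuous.intervalIntegrable
        exact ((Real.continuous_rpow_const hs0.le).comp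
          ((continuous_const.sub continuous_id).div_const _)).mul continuous_const
      have hJ1 : ∫ u in c..d, ((u - c) / (d - c)) ^ s = (d - c) / (s + 1) := by
        have h := intervalIntegral.integral_comp_sub_right (a := c) (b := d)
          (fun v => (v / (d - c)) ^ s) c
        rw [sub_self] at h
        calc ∫ u in c..d, ((u - c) / (d - c)) ^ s
            = ∫ v in (0:ℝ)..(d - c), (v / (d - c)) ^ s := h
          _ = (d - c) / (s + 1) := aux_J hdc hs0
      have hJ2 : ∫ u in c..d, ((d - u) / (d - c)) ^ s = (d - c) / (s + 1) := by
        have h := intervalIntegral.integral_comp_sub_left (a := c) (b := d)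
          (fun v => (v / (d - c)) ^ s) d
        rw [sub_self] at h
        calc ∫ u in c..d, ((d - u) / (d - c)) ^ s
            = ∫ v in (0:ℝ)..(d - c), (v / (d - c)) ^ s := h
          _ = (d - c) / (s + 1) := aux_J hdc hs0
      rw [h0, intervalIntegral.integral_add hi1 hi2,
        intervalIntegral.integral_mul_const, intervalIntegral.integral_mul_const, hJ1, hJ2]
      ring
    exact le_trans stepA (le_of_eq stepB)
  -- combine
  have step2 : (∫ u, ‖d - u‖ ^ p ∂μ) ^ (1 / p) * (∫ u, ‖g u‖ ^ q ∂μ) ^ (1 / q)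
      ≤ ((d - c) ^ (p + 1) / (p + 1)) ^ (1 / p) * ((d - c) * (A + B) / (s + 1)) ^ (1 / q) := by
    rw [hW]
    refine mul_le_mul_of_nonneg_left ?_ (Real.rpow_nonneg (by positivity) _)
    exact Real.rpow_le_rpow hMnn hM (by positivity)
  have halg : ((d - c) ^ (p + 1) / (p + 1)) ^ (1 / p) * ((d - c) * (A + B) / (s + 1)) ^ (1 / q)
      = (1 / (1 + p)) ^ (1 / p) * (1 / (s + 1)) ^ (1 / q) * ((d - c) ^ 2 * (A + B) ^ (1 / q)) := by
    have hAB : 0 ≤ A + B := by linarith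
    have hdc1 : (0:ℝ) ≤ (d - c) ^ (p + 1) := Real.rpow_nonneg hdc.le _
    have e1 : (d - c) ^ (p + 1) / (p + 1) = (d - c) ^ (p + 1) * (1 / (1 + p)) := by
      rw [add_comm p 1]; ring
    have e2 : (d - c) * (A + B) / (s + 1) = (d - c) * ((A + B) * (1 / (s + 1))) := by ring
    rw [e1, e2, Real.mul_rpow hdc1 (by positivity),
      Real.mul_rpow hdc.le (by positivity),
      Real.mul_rpow hAB (by positivity),
      ← Real.rpow_natCast (d - c) 2, ← Real.rpow_mul hdc.le]
    rw [show ((d - c) ^ ((p + 1) * (1 / p)) : ℝ) = (d - c) ^ ((p + 1) * (1 / p)) from rfl]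
    have hexp : (p + 1) * (1 / p) + 1 / q = ((2:ℕ):ℝ) := by
      have h := hpq.inv_add_inv_eq_one
      have : (p + 1) * (1 / p) = 1 + 1 / p := by field_simp
      rw [this]
      push_cast
      rw [one_div, one_div]
      linarith
    rw [← hexp, Real.rpow_add hdc]
    ring
  calc |∫ u in c..d, (d - u) * g u| ≤ ∫ u, ‖d - u‖ * ‖g u‖ ∂μ := step1
    _ ≤ (∫ u, ‖d - u‖ ^ p ∂μ) ^ (1 / p) * (∫ u, ‖g u‖ ^ q ∂μ) ^ (1 / q) := hHolder
    _ ≤ ((d - c) ^ (p + 1) / (p + 1)) ^ (1 / p) * ((d - c) * (A + B) / (s + 1)) ^ (1 / q) := step2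
    _ = _ := halg

lemma aux_key' {p q s : ℝ} (hpq : p.HolderConjugate q) (hs0 : 0 < s)
    {g : ℝ → ℝ} {c d : ℝ} (hcd : c < d)
    (hg : IntervalIntegrable g volume c d) {A B : ℝ}
    (hbound : ∀ u ∈ Icc c d,
      |g u| ^ q ≤ ((d - u) / (d - c)) ^ s * A + ((u - c) / (d - c)) ^ s * B) :
    |∫ u in c..d, (u - c) * g u| ≤
      (1 / (1 + p)) ^ (1 / p) * (1 / (s + 1)) ^ (1 / q) * ((d - c) ^ 2 * (A + B) ^ (1 / q)) := by
  have hg' : IntervalIntegrable (fun v => g (c + d - v)) volume c d := by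
    have := hg.comp_sub_left (c + d)
    simpa using this.symm
  have hbound' : ∀ u ∈ Icc c d,
      |(fun v => g (c + d - v)) u| ^ q ≤
        ((u - c) / (d - c)) ^ s * A + ((d - u) / (d - c)) ^ s * B := by
    intro u hu
    have hu' : c + d - u ∈ Icc c d := ⟨by linarith [hu.2], by linarith [hu.1]⟩
    have h := hbound (c + d - u) hu'
    have e1 : c + d - u - c = d - u := by ring
    have e2 : d - (c + d - u) = u - c := by ring
    rw [e1, e2] at h
    exact h
  have hmain := aux_key hpq hs0 hcd hg' hbound'
  have heq : ∫ v in c..d, (d - v) * g (c + d - v) = ∫ u in c..d, (u - c) * g u := by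
    have h1 : (∫ v in c..d, (d - v) * g (c + d - v))
        = ∫ v in c..d, ((c + d - v) - c) * g (c + d - v) :=
      intervalIntegral.integral_congr (fun v _ => by
        show (d - v) * g (c + d - v) = ((c + d - v) - c) * g (c + d - v); ring)
    have h2 := intervalIntegral.integral_comp_sub_left (a := c) (b := d)
      (fun u => (u - c) * g u) (c + d)
    rw [add_sub_cancel_right, add_sub_cancel_left] at h2
    rw [h1]
    exact h2
  rw [heq] at hmain
  exact hmain

theorem stmt_7
    (I : Set ℝ) (hI : Convex ℝ I) (hIpos : I ⊆ Ioi (0:ℝ))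
    (f f' : ℝ → ℝ) (a b : ℝ) (ha : a ∈ interior I) (hb : b ∈ interior I) (hab : a < b)
    (hdiff : ∀ y ∈ interior I, HasDerivAt f (f' y) y)
    (hint : IntervalIntegrable f' volume a b)
    (p q : ℝ) (hp : 1 < p) (hq : q = p / (p - 1))
    (s : ℝ) (hs : s ∈ Ioc (0:ℝ) 1)
    (hcvx : ∀ x ∈ Icc a b, ∀ y ∈ Icc a b, ∀ t ∈ Icc (0:ℝ) 1,
      |f' (t * x + (1 - t) * y)| ^ q ≤ t ^ s * |f' x| ^ q + (1 - t) ^ s * |f' y| ^ q)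
    :
    ∀ x ∈ Icc a b,
      |((b - x) * f b + (x - a) * f a) / (b - a) - (1 / (b - a)) * ∫ u in a..b, f u|
        ≤ (1 / (1 + p)) ^ (1 / p) * (1 / (s + 1)) ^ (1 / q) *
            (((x - a) ^ 2 / (b - a)) * (|f' x| ^ q + |f' a| ^ q) ^ (1 / q)
              + ((b - x) ^ 2 / (b - a)) * (|f' x| ^ q + |f' b| ^ q) ^ (1 / q)) := by
  intro x hx
  obtain ⟨hax, hxb⟩ := hx
  obtain ⟨hs0, hs1⟩ := hs
  have hpq : p.HolderConjugate q := (Real.holderConjugate_iff_eq_conjExponent hp).2 hq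
  have hba : 0 < b - a := sub_pos.2 hab
  have hIccI : Icc a b ⊆ interior I := by
    rw [← segment_eq_Icc hab.le]
    exact (hI.interior).segment_subset ha hb
  have hderiv : ∀ u ∈ Set.uIcc a b, HasDerivAt f (f' u) u := by
    intro u hu
    exact hdiff u (hIccI (by rwa [Set.uIcc_of_le hab.le] at hu))
  -- integration by parts
  have hparts : ∫ u in a..b, (u - x) * f' u
      = (b - x) * f b - (a - x) * f a - ∫ u in a..b, f u := by
    have h := intervalIntegral.integral_mul_deriv_eq_deriv_mul
      (u := fun u => u - x) (v := f) (u' := fun _ => (1:ℝ)) (v' := f')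
      (fun y _ => (hasDerivAt_id y).sub_const x) (fun y hy => hderiv y hy)
      intervalIntegrable_const hint
    simpa using h
  -- integrability on subintervals
  have hsub1 : IntervalIntegrable f' volume a x := hint.mono_set
    (by rw [Set.uIcc_of_le hab.le, Set.uIcc_of_le hax]; exact Icc_subset_Icc le_rfl hxb)
  have hsub2 : IntervalIntegrable f' volume x b := hint.mono_set
    (by rw [Set.uIcc_of_le hab.le, Set.uIcc_of_le hxb]; exact Icc_subset_Icc hax le_rfl)
  have hw1 : IntervalIntegrable (fun u => (u - x) * f' u) volume a x :=
    hsub1.continuousOn_mul ((continuous_id.sub continuous_const).continuousOn)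
  have hw2 : IntervalIntegrable (fun u => (u - x) * f' u) volume x b :=
    hsub2.continuousOn_mul ((continuous_id.sub continuous_const).continuousOn)
  have hsplit : ∫ u in a..b, (u - x) * f' u
      = (∫ u in a..x, (u - x) * f' u) + ∫ u in x..b, (u - x) * f' u :=
    (intervalIntegral.integral_add_adjacent_intervals hw1 hw2).symm
  -- bound the first piece
  have hT1 : |∫ u in a..x, (u - x) * f' u|
      ≤ (1 / (1 + p)) ^ (1 / p) * (1 / (s + 1)) ^ (1 / q) *
          ((x - a) ^ 2 * (|f' x| ^ q + |f' a| ^ q) ^ (1 / q)) := by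
    rcases eq_or_lt_of_le hax with heq | hax'
    · subst heq
      simp
    · have hxa : 0 < x - a := sub_pos.2 hax'
      have hb1 : ∀ u ∈ Icc a x, |f' u| ^ q ≤
          ((u - a) / (x - a)) ^ s * |f' x| ^ q + ((x - u) / (x - a)) ^ s * |f' a| ^ q := by
        intro u hu
        have ht0 : 0 ≤ (u - a) / (x - a) := div_nonneg (by linarith [hu.1]) hxa.le
        have ht1 : (u - a) / (x - a) ≤ 1 := by rw [div_le_one hxa]; linarith [hu.2]
        have h := hcvx x ⟨hax, hxb⟩ a ⟨le_rfl, hab.le⟩ ((u - a) / (x - a)) ⟨ht0, ht1⟩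
        have harg : (u - a) / (x - a) * x + (1 - (u - a) / (x - a)) * a = u := by
          field_simp
          ring
        rw [harg] at h
        have hrem : (x - u) / (x - a) = 1 - (u - a) / (x - a) := by
          field_simp
          ring
        rw [hrem]
        exact h
      have hk := aux_key hpq hs0 hax' hsub1 hb1
      have habs : |∫ u in a..x, (u - x) * f' u| = |∫ u in a..x, (x - u) * f' u| := by
        rw [show (∫ u in a..x, (u - x) * f' u) = -∫ u in a..x, (x - u) * f' u by
          rw [← intervalIntegral.integral_neg]
          exact intervalIntegral.integral_congr fun u _ => by
            show (u - x) * f' u = -((x - u) * f' u); ring]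
        exact abs_neg _
      rw [habs]
      exact hk
  -- bound the second piece
  have hT2 : |∫ u in x..b, (u - x) * f' u|
      ≤ (1 / (1 + p)) ^ (1 / p) * (1 / (s + 1)) ^ (1 / q) *
          ((b - x) ^ 2 * (|f' x| ^ q + |f' b| ^ q) ^ (1 / q)) := by
    rcases eq_or_lt_of_le hxb with heq | hxb'
    · rw [heq]
      simp
    · have hbx : 0 < b - x := sub_pos.2 hxb'
      have hb2 : ∀ u ∈ Icc x b, |f' u| ^ q ≤
          ((b - u) / (b - x)) ^ s * |f' x| ^ q + ((u - x) / (b - x)) ^ s * |f' b| ^ q := by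
        intro u hu
        have ht0 : 0 ≤ (b - u) / (b - x) := div_nonneg (by linarith [hu.2]) hbx.le
        have ht1 : (b - u) / (b - x) ≤ 1 := by rw [div_le_one hbx]; linarith [hu.1]
        have h := hcvx x ⟨hax, hxb⟩ b ⟨hab.le, le_rfl⟩ ((b - u) / (b - x)) ⟨ht0, ht1⟩
        have harg : (b - u) / (b - x) * x + (1 - (b - u) / (b - x)) * b = u := by
          field_simp
          ring
        rw [harg] at h
        have hrem : (u - x) / (b - x) = 1 - (b - u) / (b - x) := by
          field_simp
          ring
        rw [hrem]
        exact h
      exact aux_key' hpq hs0 hxb' hsub2 hb2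
  -- assemble
  have hLHS : ((b - x) * f b + (x - a) * f a) / (b - a) - (1 / (b - a)) * ∫ u in a..b, f u
      = (1 / (b - a)) * ∫ u in a..b, (u - x) * f' u := by
    rw [hparts]
    field_simp
    ring
  rw [hLHS, hsplit]
  have hba' : 0 < 1 / (b - a) := by positivity
  calc |1 / (b - a) * ((∫ u in a..x, (u - x) * f' u) + ∫ u in x..b, (u - x) * f' u)|
      = 1 / (b - a) * |(∫ u in a..x, (u - x) * f' u) + ∫ u in x..b, (u - x) * f' u| := by
        rw [abs_mul, abs_of_pos hba']
    _ ≤ 1 / (b - a) * (|∫ u in a..x, (u - x) * f' u| + |∫ u in x..b, (u - x) * f' u|) :=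
        mul_le_mul_of_nonneg_left (abs_add_le _ _) hba'.le
    _ ≤ 1 / (b - a) *
          ((1 / (1 + p)) ^ (1 / p) * (1 / (s + 1)) ^ (1 / q) *
            ((x - a) ^ 2 * (|f' x| ^ q + |f' a| ^ q) ^ (1 / q))
          + (1 / (1 + p)) ^ (1 / p) * (1 / (s + 1)) ^ (1 / q) *
            ((b - x) ^ 2 * (|f' x| ^ q + |f' b| ^ q) ^ (1 / q))) :=
        mul_le_mul_of_nonneg_left (add_le_add hT1 hT2) hba'.le
    _ = (1 / (1 + p)) ^ (1 / p) * (1 / (s + 1)) ^ (1 / q) *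
            (((x - a) ^ 2 / (b - a)) * (|f' x| ^ q + |f' a| ^ q) ^ (1 / q)
              + ((b - x) ^ 2 / (b - a)) * (|f' x| ^ q + |f' b| ^ q) ^ (1 / q)) := by
        ring
end

section
/- Let a, b ∈ ℝ with 0 < a < b and let n ∈ ℤ with |n| ≥ 1 and n ∉ {−1, 0}. Then |A(aⁿ, bⁿ) − Lₙⁿ(a, b)| ≤ |n|·((b−a)/12)·( A(a,b)^{n−1} + 2·A(a^{n−1}, b^{n−1}) ). -/
open MeasureTheory Set intervalIntegral Real

-- ∫_a^c ((c-x)p + (x-a)q)(c-x) dx = (c-a)^3 (2p+q)/6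
private lemma key_int (a c p q : ℝ) :
    ∫ x in a..c, ((c - x) * p + (x - a) * q) * (c - x) =
      (c - a) ^ 3 * (2 * p + q) / 6 := by
  have hF : ∀ x : ℝ, HasDerivAt
      (fun x : ℝ => -(p * (c - x) ^ 3) / 3 +
        q * (-(x ^ 3 / 3) + (a + c) / 2 * x ^ 2 - a * c * x))
      (((c - x) * p + (x - a) * q) * (c - x)) x := by
    intro x
    have h1 : HasDerivAt (fun x : ℝ => -(p * (c - x) ^ 3) / 3)
        (-(p * ((3 : ℕ) * (c - x) ^ 2 * (-1))) / 3) x :=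
      ((((hasDerivAt_id x).const_sub c).pow 3).const_mul p).neg.div_const 3
    have h2 : HasDerivAt
        (fun x : ℝ => q * (-(x ^ 3 / 3) + (a + c) / 2 * x ^ 2 - a * c * x))
        (q * (-((3 : ℕ) * x ^ 2 / 3) + (a + c) / 2 * ((2 : ℕ) * x) - a * c * 1)) x := by
      have p3 : HasDerivAt (fun x : ℝ => x ^ 3) ((3 : ℕ) * x ^ 2) x := by
        simpa using hasDerivAt_pow 3 x
      have p2 : HasDerivAt (fun x : ℝ => x ^ 2) ((2 : ℕ) * x) x := by
        simpa using hasDerivAt_pow 2 x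
      exact ((((p3.div_const 3).neg.add (p2.const_mul ((a + c) / 2))).sub
        ((hasDerivAt_id x).const_mul (a * c))).const_mul q)
    refine (h1.add h2).congr_deriv ?_
    push_cast; ring
  rw [integral_eq_sub_of_hasDerivAt (fun x _ => hF x)
    ((Continuous.continuousOn (by continuity)).intervalIntegrable)]
  ring

-- ∫_a^c ((x-a)p + (c-x)q)(x-a) dx = (c-a)^3 (2p+q)/6
private lemma key_int' (a c p q : ℝ) :
    ∫ x in a..c, ((x - a) * p + (c - x) * q) * (x - a) =
      (c - a) ^ 3 * (2 * p + q) / 6 := by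
  have hF : ∀ x : ℝ, HasDerivAt
      (fun x : ℝ => p * (x - a) ^ 3 / 3 +
        q * (-(x ^ 3 / 3) + (a + c) / 2 * x ^ 2 - a * c * x))
      (((x - a) * p + (c - x) * q) * (x - a)) x := by
    intro x
    have h1 : HasDerivAt (fun x : ℝ => p * (x - a) ^ 3 / 3)
        (p * ((3 : ℕ) * (x - a) ^ 2 * 1) / 3) x :=
      ((((hasDerivAt_id x).sub_const a).pow 3).const_mul p).div_const 3
    have h2 : HasDerivAt
        (fun x : ℝ => q * (-(x ^ 3 / 3) + (a + c) / 2 * x ^ 2 - a * c * x))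
        (q * (-((3 : ℕ) * x ^ 2 / 3) + (a + c) / 2 * ((2 : ℕ) * x) - a * c * 1)) x := by
      have p3 : HasDerivAt (fun x : ℝ => x ^ 3) ((3 : ℕ) * x ^ 2) x := by
        simpa using hasDerivAt_pow 3 x
      have p2 : HasDerivAt (fun x : ℝ => x ^ 2) ((2 : ℕ) * x) x := by
        simpa using hasDerivAt_pow 2 x
      exact ((((p3.div_const 3).neg.add (p2.const_mul ((a + c) / 2))).sub
        ((hasDerivAt_id x).const_mul (a * c))).const_mul q)
    refine (h1.add h2).congr_deriv ?_
    push_cast; ring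
  rw [integral_eq_sub_of_hasDerivAt (fun x _ => hF x)
    ((Continuous.continuousOn (by continuity)).intervalIntegrable)]
  ring

private lemma zpow_le_interp (k : ℤ) {u v x : ℝ} (hu : 0 < u) (huv : u < v)
    (hx : x ∈ Icc u v) :
    x ^ k ≤ ((v - x) * u ^ k + (x - u) * v ^ k) / (v - u) := by
  have hvu : (0 : ℝ) < v - u := by linarith
  have hl : 0 ≤ (v - x) / (v - u) := div_nonneg (by linarith [hx.2]) hvu.le
  have hr : 0 ≤ (x - u) / (v - u) := div_nonneg (by linarith [hx.1]) hvu.le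
  have hsum : (v - x) / (v - u) + (x - u) / (v - u) = 1 := by
    field_simp; ring
  have hc := (convexOn_zpow k).2 (mem_Ioi.2 hu) (mem_Ioi.2 (hu.trans huv)) hl hr hsum
  simp only [smul_eq_mul] at hc
  have hx' : (v - x) / (v - u) * u + (x - u) / (v - u) * v = x := by
    field_simp; ring
  rw [hx'] at hc
  calc x ^ k ≤ (v - x) / (v - u) * u ^ k + (x - u) / (v - u) * v ^ k := hc
    _ = ((v - x) * u ^ k + (x - u) * v ^ k) / (v - u) := by ring

theorem stmt_17
    (a b : ℝ) (ha : 0 < a) (hab : a < b) (n : ℤ) (hn : 1 ≤ |n|) (hn1 : n ≠ -1) :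
    |(a ^ n + b ^ n) / 2 - (b ^ (n + 1) - a ^ (n + 1)) / (((n : ℝ) + 1) * (b - a))|
      ≤ |(n : ℝ)| * ((b - a) / 12) *
          (((a + b) / 2) ^ (n - 1) + 2 * ((a ^ (n - 1) + b ^ (n - 1)) / 2)) := by

  set m : ℝ := (a + b) / 2 with hm_def
  have hb : 0 < b := ha.trans hab
  have ham : a < m := by simp only [hm_def]; linarith
  have hmb : m < b := by simp only [hm_def]; linarith
  have hm : 0 < m := ha.trans ham
  have hn0 : n ≠ 0 := by intro h; simp [h] at hn
  have hnR : (n : ℝ) ≠ 0 := Int.cast_ne_zero.mpr hn0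
  have hn1R : (n : ℝ) + 1 ≠ 0 := by
    intro h
    apply hn1
    have : (n : ℝ) = ((-1 : ℤ) : ℝ) := by push_cast; linarith
    exact_mod_cast this
  have hba : (0 : ℝ) < b - a := by linarith
  -- continuity / integrability
  have hxne : ∀ x ∈ Icc a b, x ≠ 0 := fun x hx => ne_of_gt (lt_of_lt_of_le ha hx.1)
  have hcont : ∀ k : ℤ, ContinuousOn (fun x : ℝ => x ^ k) (Icc a b) := fun k =>
    continuousOn_id.zpow₀ k (fun x hx => Or.inl (hxne x hx))
  set g : ℝ → ℝ := fun x => (n : ℝ) * x ^ (n - 1) * (x - m) with hg_def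
  have hgc : ContinuousOn g (Icc a b) :=
    (continuousOn_const.mul (hcont (n - 1))).mul (continuousOn_id.sub continuousOn_const)
  have hIccab : uIcc a b = Icc a b := uIcc_of_le hab.le
  have hIccam : uIcc a m = Icc a m := uIcc_of_le ham.le
  have hIccmb : uIcc m b = Icc m b := uIcc_of_le hmb.le
  have hsub1 : Icc a m ⊆ Icc a b := Icc_subset_Icc le_rfl hmb.le
  have hsub2 : Icc m b ⊆ Icc a b := Icc_subset_Icc ham.le le_rfl
  have hgi_am : IntervalIntegrable g volume a m :=
    ContinuousOn.intervalIntegrable (by rw [hIccam]; exact hgc.mono hsub1)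
  have hgi_mb : IntervalIntegrable g volume m b :=
    ContinuousOn.intervalIntegrable (by rw [hIccmb]; exact hgc.mono hsub2)
  -- value of the integral of g
  have h0ab : (0 : ℝ) ∉ uIcc a b := by rw [hIccab]; intro h; exact absurd h.1 (not_le.2 ha)
  have hnm1 : n - 1 ≠ -1 := fun h => hn0 (by omega)
  have hI1 : ∫ x in a..b, x ^ n = (b ^ (n + 1) - a ^ (n + 1)) / ((n : ℝ) + 1) := by
    exact integral_zpow (Or.inr ⟨hn1, h0ab⟩)
  have hI2 : ∫ x in a..b, x ^ (n - 1) = (b ^ n - a ^ n) / (n : ℝ) := by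
    have h := integral_zpow (a := a) (b := b) (n := n - 1) (Or.inr ⟨hnm1, h0ab⟩)
    push_cast at h
    rw [sub_add_cancel] at h
    rw [h]
    norm_num
  have hInt1 : IntervalIntegrable (fun x : ℝ => x ^ n) volume a b :=
    ContinuousOn.intervalIntegrable (by rw [hIccab]; exact hcont n)
  have hInt2 : IntervalIntegrable (fun x : ℝ => x ^ (n - 1)) volume a b :=
    ContinuousOn.intervalIntegrable (by rw [hIccab]; exact hcont (n - 1))
  have hgval : ∫ x in a..b, g x =
      (n : ℝ) * ((b ^ (n + 1) - a ^ (n + 1)) / ((n : ℝ) + 1)) -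
        (n : ℝ) * m * ((b ^ n - a ^ n) / (n : ℝ)) := by
    have hcongr : ∫ x in a..b, g x =
        ∫ x in a..b, ((n : ℝ) * x ^ n - (n : ℝ) * m * x ^ (n - 1)) := by
      apply integral_congr
      intro x hx
      rw [hIccab] at hx
      have hx0 : x ≠ 0 := hxne x hx
      simp only [hg_def]
      have : x ^ n = x ^ (n - 1) * x := by
        rw [← zpow_add_one₀ hx0, sub_add_cancel]
      rw [this]; ring
    rw [hcongr, intervalIntegral.integral_sub ((hInt1.const_mul _))
      ((hInt2.const_mul _)), intervalIntegral.integral_const_mul,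
      intervalIntegral.integral_const_mul, hI1, hI2]
  -- key identity
  have hE : (a ^ n + b ^ n) / 2 -
      (b ^ (n + 1) - a ^ (n + 1)) / (((n : ℝ) + 1) * (b - a)) =
      (∫ x in a..b, g x) / (b - a) := by
    rw [hgval]
    have ha1 : a ^ (n + 1) = a ^ n * a := by rw [zpow_add_one₀ (ne_of_gt ha)]
    have hb1 : b ^ (n + 1) = b ^ n * b := by rw [zpow_add_one₀ (ne_of_gt hb)]
    rw [ha1, hb1, hm_def]
    field_simp
    ring
  -- pointwise bounds and integral bounds on [a, m]
  have hLpt : ∀ x ∈ Icc a m, x ^ (n - 1) * (m - x) ≤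
      ((m - x) * (a ^ (n - 1) / (m - a)) + (x - a) * (m ^ (n - 1) / (m - a))) * (m - x) := by
    intro x hx
    have h1 := zpow_le_interp (n - 1) ha ham hx
    have h2 : ((m - x) * a ^ (n - 1) + (x - a) * m ^ (n - 1)) / (m - a) =
        (m - x) * (a ^ (n - 1) / (m - a)) + (x - a) * (m ^ (n - 1) / (m - a)) := by ring
    rw [h2] at h1
    exact mul_le_mul_of_nonneg_right h1 (by linarith [hx.2])
  have hLint : ∫ x in a..m, x ^ (n - 1) * (m - x) ≤
      (m - a) ^ 2 * (2 * (a ^ (n - 1)) + m ^ (n - 1)) / 6 := by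
    have hc1 : ContinuousOn (fun x : ℝ => x ^ (n - 1) * (m - x)) (uIcc a m) := by
      rw [hIccam]
      exact ((hcont (n - 1)).mono hsub1).mul (continuousOn_const.sub continuousOn_id)
    have hc2 : Continuous (fun x : ℝ =>
        ((m - x) * (a ^ (n - 1) / (m - a)) + (x - a) * (m ^ (n - 1) / (m - a))) * (m - x)) := by
      fun_prop
    have hmono := integral_mono_on (μ := volume) (a := a) (b := m) ham.le
      hc1.intervalIntegrable (hc2.intervalIntegrable a m) hLpt
    have hval := key_int a m (a ^ (n - 1) / (m - a)) (m ^ (n - 1) / (m - a))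
    rw [hval] at hmono
    have hma : m - a ≠ 0 := ne_of_gt (by linarith)
    calc ∫ x in a..m, x ^ (n - 1) * (m - x)
        ≤ (m - a) ^ 3 * (2 * (a ^ (n - 1) / (m - a)) + m ^ (n - 1) / (m - a)) / 6 := hmono
      _ = (m - a) ^ 2 * (2 * (a ^ (n - 1)) + m ^ (n - 1)) / 6 := by field_simp
  have hRpt : ∀ x ∈ Icc m b, x ^ (n - 1) * (x - m) ≤
      ((x - m) * (b ^ (n - 1) / (b - m)) + (b - x) * (m ^ (n - 1) / (b - m))) * (x - m) := by
    intro x hx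
    have h1 := zpow_le_interp (n - 1) hm hmb hx
    have h2 : ((b - x) * m ^ (n - 1) + (x - m) * b ^ (n - 1)) / (b - m) =
        (x - m) * (b ^ (n - 1) / (b - m)) + (b - x) * (m ^ (n - 1) / (b - m)) := by ring
    rw [h2] at h1
    exact mul_le_mul_of_nonneg_right h1 (by linarith [hx.1])
  have hRint : ∫ x in m..b, x ^ (n - 1) * (x - m) ≤
      (b - m) ^ 2 * (2 * (b ^ (n - 1)) + m ^ (n - 1)) / 6 := by
    have hc1 : ContinuousOn (fun x : ℝ => x ^ (n - 1) * (x - m)) (uIcc m b) := by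
      rw [hIccmb]
      exact ((hcont (n - 1)).mono hsub2).mul (continuousOn_id.sub continuousOn_const)
    have hc2 : Continuous (fun x : ℝ =>
        ((x - m) * (b ^ (n - 1) / (b - m)) + (b - x) * (m ^ (n - 1) / (b - m))) * (x - m)) := by
      fun_prop
    have hmono := integral_mono_on (μ := volume) (a := m) (b := b) hmb.le
      hc1.intervalIntegrable (hc2.intervalIntegrable m b) hRpt
    have hval := key_int' m b (b ^ (n - 1) / (b - m)) (m ^ (n - 1) / (b - m))
    rw [hval] at hmono
    have hbm : b - m ≠ 0 := ne_of_gt (by linarith)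
    calc ∫ x in m..b, x ^ (n - 1) * (x - m)
        ≤ (b - m) ^ 3 * (2 * (b ^ (n - 1) / (b - m)) + m ^ (n - 1) / (b - m)) / 6 := hmono
      _ = (b - m) ^ 2 * (2 * (b ^ (n - 1)) + m ^ (n - 1)) / 6 := by field_simp
  -- |g| on the two pieces
  have habsL : ∫ x in a..m, |g x| = |(n : ℝ)| * ∫ x in a..m, x ^ (n - 1) * (m - x) := by
    rw [← intervalIntegral.integral_const_mul]
    apply integral_congr
    intro x hx
    rw [hIccam] at hx
    have hx0 : 0 < x := lt_of_lt_of_le ha hx.1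
    have hxp : (0 : ℝ) < x ^ (n - 1) := zpow_pos hx0 _
    simp only [hg_def]
    rw [abs_mul, abs_mul, abs_of_pos hxp, abs_of_nonpos (by linarith [hx.2] : x - m ≤ 0)]
    ring
  have habsR : ∫ x in m..b, |g x| = |(n : ℝ)| * ∫ x in m..b, x ^ (n - 1) * (x - m) := by
    rw [← intervalIntegral.integral_const_mul]
    apply integral_congr
    intro x hx
    rw [hIccmb] at hx
    have hx0 : 0 < x := hm.trans_le hx.1
    have hxp : (0 : ℝ) < x ^ (n - 1) := zpow_pos hx0 _
    simp only [hg_def]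
    rw [abs_mul, abs_mul, abs_of_pos hxp, abs_of_nonneg (by linarith [hx.1] : 0 ≤ x - m)]
    ring
  -- assemble the bound on |∫ g|
  have hnn : (0 : ℝ) ≤ |(n : ℝ)| := abs_nonneg _
  have hmain : |∫ x in a..b, g x| ≤
      |(n : ℝ)| * ((m - a) ^ 2 * (2 * (a ^ (n - 1)) + m ^ (n - 1)) / 6 +
        (b - m) ^ 2 * (2 * (b ^ (n - 1)) + m ^ (n - 1)) / 6) := by
    rw [← integral_add_adjacent_intervals hgi_am hgi_mb]
    calc |(∫ x in a..m, g x) + ∫ x in m..b, g x|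
        ≤ |∫ x in a..m, g x| + |∫ x in m..b, g x| := abs_add_le _ _
      _ ≤ (∫ x in a..m, |g x|) + ∫ x in m..b, |g x| :=
          add_le_add (abs_integral_le_integral_abs ham.le)
            (abs_integral_le_integral_abs hmb.le)
      _ = |(n : ℝ)| * (∫ x in a..m, x ^ (n - 1) * (m - x)) +
          |(n : ℝ)| * ∫ x in m..b, x ^ (n - 1) * (x - m) := by rw [habsL, habsR]
      _ ≤ |(n : ℝ)| * ((m - a) ^ 2 * (2 * (a ^ (n - 1)) + m ^ (n - 1)) / 6) +
          |(n : ℝ)| * ((b - m) ^ 2 * (2 * (b ^ (n - 1)) + m ^ (n - 1)) / 6) :=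
          add_le_add (mul_le_mul_of_nonneg_left hLint hnn)
            (mul_le_mul_of_nonneg_left hRint hnn)
      _ = _ := by ring
  -- finish
  rw [hE, abs_div, abs_of_pos hba, div_le_iff₀ hba]
  calc |∫ x in a..b, g x|
      ≤ |(n : ℝ)| * ((m - a) ^ 2 * (2 * (a ^ (n - 1)) + m ^ (n - 1)) / 6 +
        (b - m) ^ 2 * (2 * (b ^ (n - 1)) + m ^ (n - 1)) / 6) := hmain
    _ = |(n : ℝ)| * ((b - a) / 12) *
          (m ^ (n - 1) + 2 * ((a ^ (n - 1) + b ^ (n - 1)) / 2)) * (b - a) := by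
        rw [hm_def]; ring
end

section
/- Let a, b ∈ ℝ with 0 < a < b. Then |A(a⁻¹, b⁻¹) − L(a,b)⁻¹| ≤ ((b−a)/12)·( 1/A(a,b)² + 2·K(a,b)²/G(a,b)⁴ ). -/
open MeasureTheory Set intervalIntegral Real

theorem stmt_18
    (a b : ℝ) (ha : 0 < a) (hab : a < b) :
    |(a⁻¹ + b⁻¹) / 2 - (Real.log b - Real.log a) / (b - a)|
      ≤ ((b - a) / 12) *
          (1 / ((a + b) / 2) ^ 2
            + 2 * (Real.sqrt ((a ^ 2 + b ^ 2) / 2)) ^ 2 / (Real.sqrt (a * b)) ^ 4) := by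
  have hb : 0 < b := ha.trans hab
  have hba : 0 < b - a := by linarith
  set F : ℝ → ℝ := fun x => (x - a) * (a⁻¹ + x⁻¹) / 2 - (Real.log x - Real.log a) with hFdef
  set H : ℝ → ℝ := fun x => (x - a)^2 * (a^2 + x^2) / (12 * a^2 * x^2) - F x with hHdef
  -- derivative of F
  have hFd : ∀ x : ℝ, 0 < x → HasDerivAt F ((x - a)^2 / (2 * a * x^2)) x := by
    intro x hx
    have h1 : HasDerivAt (fun y : ℝ => (y - a) * (a⁻¹ + y⁻¹))
        (1 * (a⁻¹ + x⁻¹) + (x - a) * (-(x^2)⁻¹)) x :=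
      (((hasDerivAt_id x).sub_const a)).mul ((hasDerivAt_inv hx.ne').const_add a⁻¹)
    have h2 : HasDerivAt (fun y : ℝ => Real.log y - Real.log a) x⁻¹ x :=
      (Real.hasDerivAt_log hx.ne').sub_const _
    have h3 := (h1.div_const 2).sub h2
    refine h3.congr_deriv ?_
    field_simp
    ring
  have hHd : ∀ x : ℝ, 0 < x → HasDerivAt H
      ((x - a) * (a^3 + x^3) / (6 * a^2 * x^3) - (x - a)^2 / (2 * a * x^2)) x := by
    intro x hx
    have h1 : HasDerivAt (fun y : ℝ => (y - a)^2 * (a^2 + y^2))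
        (2 * (x - a) * (a^2 + x^2) + (x - a)^2 * (2 * x)) x := by
      have := (((hasDerivAt_id x).sub_const a).pow 2).mul
        (((hasDerivAt_id x).pow 2).const_add (a^2))
      refine this.congr_deriv ?_
      simp only [id_eq, Pi.pow_apply]
      ring
    have h2 : HasDerivAt (fun y : ℝ => 12 * a^2 * y^2) (12 * a^2 * (2 * x)) x := by
      simpa using (hasDerivAt_pow 2 x).const_mul (12 * a^2)
    have hne : 12 * a^2 * x^2 ≠ 0 := by positivity
    have h3 := (h1.div h2 hne).sub (hFd x hx)
    refine h3.congr_deriv ?_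
    field_simp
    ring
  -- F b ≥ 0
  have hFmono : MonotoneOn F (Icc a b) := by
    apply monotoneOn_of_deriv_nonneg (convex_Icc a b)
    · intro x hx
      exact ((hFd x (lt_of_lt_of_le ha hx.1)).continuousAt).continuousWithinAt
    · intro x hx
      rw [interior_Icc] at hx
      exact ((hFd x (ha.trans hx.1)).differentiableAt).differentiableWithinAt
    · intro x hx
      rw [interior_Icc] at hx
      have hx0 : 0 < x := ha.trans hx.1
      rw [(hFd x hx0).deriv]
      positivity
  have hFa : F a = 0 := by simp [hFdef]
  have hFb : 0 ≤ F b := by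
    have := hFmono (left_mem_Icc.2 hab.le) (right_mem_Icc.2 hab.le) hab.le
    rwa [hFa] at this
  -- H b ≥ 0
  have hHmono : MonotoneOn H (Icc a b) := by
    apply monotoneOn_of_deriv_nonneg (convex_Icc a b)
    · intro x hx
      exact ((hHd x (lt_of_lt_of_le ha hx.1)).continuousAt).continuousWithinAt
    · intro x hx
      rw [interior_Icc] at hx
      exact ((hHd x (ha.trans hx.1)).differentiableAt).differentiableWithinAt
    · intro x hx
      rw [interior_Icc] at hx
      have hx0 : 0 < x := ha.trans hx.1
      have hxa : 0 < x - a := by linarith [hx.1]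
      rw [(hHd x hx0).deriv]
      rw [div_sub_div _ _ (by positivity : (6:ℝ) * a^2 * x^3 ≠ 0) (by positivity : (2:ℝ) * a * x^2 ≠ 0)]
      apply div_nonneg _ (by positivity)
      have key : (x - a) * (a^3 + x^3) * (2 * a * x^2) - 6 * a^2 * x^3 * (x - a)^2
          = 2 * a * x^2 * (x - a) * ((x - a)^3 + 2 * a^3) := by ring
      rw [key]; positivity
  have hHa : H a = 0 := by simp [hHdef, hFa]
  have hHb : 0 ≤ H b := by
    have := hHmono (left_mem_Icc.2 hab.le) (right_mem_Icc.2 hab.le) hab.le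
    rwa [hHa] at this
  -- assemble
  have hFbval : F b = (b - a) * ((a⁻¹ + b⁻¹) / 2 - (Real.log b - Real.log a) / (b - a)) := by
    simp only [hFdef]
    field_simp
  have hD0 : 0 ≤ (a⁻¹ + b⁻¹) / 2 - (Real.log b - Real.log a) / (b - a) :=
    nonneg_of_mul_nonneg_right (hFbval ▸ hFb) hba
  rw [abs_of_nonneg hD0]
  have hHb' : (0:ℝ) ≤ (b - a)^2 * (a^2 + b^2) / (12 * a^2 * b^2) - F b := hHb
  have hFle : F b ≤ (b - a)^2 * (a^2 + b^2) / (12 * a^2 * b^2) := by linarith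
  have hsq1 : (Real.sqrt ((a ^ 2 + b ^ 2) / 2)) ^ 2 = (a ^ 2 + b ^ 2) / 2 :=
    Real.sq_sqrt (by positivity)
  have hsq2 : (Real.sqrt (a * b)) ^ 4 = (a * b) ^ 2 := by
    rw [show (4:ℕ) = 2 * 2 from rfl, pow_mul, Real.sq_sqrt (by positivity)]
  rw [hsq1, hsq2]
  rw [hFbval] at hFle
  have hD : (a⁻¹ + b⁻¹) / 2 - (Real.log b - Real.log a) / (b - a)
      ≤ (b - a) * (a^2 + b^2) / (12 * a^2 * b^2) := by
    rw [le_div_iff₀ (by positivity)] at *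
    nlinarith [hFle]
  refine hD.trans ?_
  have h2 : (0:ℝ) ≤ (b - a) / 12 * (1 / ((a + b) / 2) ^ 2) := by positivity
  have h3 : (b - a) / 12 * (1 / ((a + b) / 2) ^ 2 + 2 * ((a ^ 2 + b ^ 2) / 2) / (a * b) ^ 2)
      = (b - a) / 12 * (1 / ((a + b) / 2) ^ 2) + (b - a) * (a ^ 2 + b ^ 2) / (12 * a ^ 2 * b ^ 2) := by
    ring
  linarith
end

section
/- Let a, b ∈ ℝ with 0 < a < b, let n ∈ ℤ with |n| ≥ 1 and n ∉ {−1, 0}, and let q > 1. Then |A(aⁿ, bⁿ) − Lₙⁿ(a, b)| ≤ |n|·(b−a)·2^{1/q − 3}·3^{−1/q}·{ ( A(a,b)^{q(n−1)}/2 + a^{q(n−1)} )^{1/q} + ( A(a,b)^{q(n−1)}/2 + b^{q(n−1)} )^{1/q} }. -/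
open MeasureTheory Set intervalIntegral Real
open scoped Interval

private lemma integ_quad (a b c₀ c₁ c₂ : ℝ) :
    ∫ x in a..b, (c₂ * x ^ 2 + c₁ * x + c₀) =
      c₂ * (b ^ 3 - a ^ 3) / 3 + c₁ * (b ^ 2 - a ^ 2) / 2 + c₀ * (b - a) := by
  have h1 : IntervalIntegrable (fun x : ℝ => c₂ * x ^ 2) volume a b := by
    apply Continuous.intervalIntegrable; continuity
  have h2 : IntervalIntegrable (fun x : ℝ => c₁ * x) volume a b := by
    apply Continuous.intervalIntegrable; continuity
  have h3 : IntervalIntegrable (fun _ : ℝ => (c₀ : ℝ)) volume a b := intervalIntegrable_const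
  rw [intervalIntegral.integral_add (h1.add h2) h3, intervalIntegral.integral_add h1 h2,
    intervalIntegral.integral_const_mul, intervalIntegral.integral_const_mul,
    integral_pow, integral_id, intervalIntegral.integral_const]
  push_cast [smul_eq_mul]
  ring

private lemma zpow_contOn (s : ℤ) (a c : ℝ) (ha : 0 < a) :
    ContinuousOn (fun x : ℝ => x ^ s) (Icc a c) := by
  intro x hx
  have hx0 : x ≠ 0 := by have := hx.1; intro h; rw [h] at this; linarith
  exact (continuousAt_zpow₀ x s (Or.inl hx0)).continuousWithinAt

private lemma integ_bound_left (s : ℤ) (a c : ℝ) (ha : 0 < a) (hac : a < c) :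
    ∫ x in a..c, (c - x) * x ^ s ≤ (c - a) ^ 2 * (2 * a ^ s + c ^ s) / 6 := by
  have hc : 0 < c := ha.trans hac
  have hca : (0:ℝ) < c - a := by linarith
  have hint1 : IntervalIntegrable (fun x : ℝ => (c - x) * x ^ s) volume a c := by
    apply ContinuousOn.intervalIntegrable
    rw [uIcc_of_le hac.le]
    exact (continuousOn_const.sub continuousOn_id).mul (zpow_contOn s a c ha)
  have hint2 : IntervalIntegrable
      (fun x : ℝ => ((c - x) ^ 2 * a ^ s + (c - x) * (x - a) * c ^ s) / (c - a)) volume a c := by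
    apply Continuous.intervalIntegrable
    fun_prop
  have hmono : ∀ x ∈ Icc a c,
      (c - x) * x ^ s ≤ ((c - x) ^ 2 * a ^ s + (c - x) * (x - a) * c ^ s) / (c - a) := by
    intro x hx
    have hcx : (0:ℝ) ≤ c - x := by linarith [hx.2]
    have hxa : (0:ℝ) ≤ x - a := by linarith [hx.1]
    have hsum : (c - x) / (c - a) + (x - a) / (c - a) = 1 := by
      rw [← add_div, show c - x + (x - a) = c - a by ring, div_self hca.ne']
    have key := (convexOn_zpow (𝕜 := ℝ) s).2 (mem_Ioi.mpr ha) (mem_Ioi.mpr hc)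
      (by positivity) (by positivity) hsum
    have hxeq : ((c - x) / (c - a)) • a + ((x - a) / (c - a)) • c = x := by
      simp only [smul_eq_mul]
      field_simp
      ring
    rw [hxeq] at key
    simp only [smul_eq_mul] at key
    calc (c - x) * x ^ s
        ≤ (c - x) * ((c - x) / (c - a) * a ^ s + (x - a) / (c - a) * c ^ s) :=
          mul_le_mul_of_nonneg_left key hcx
      _ = ((c - x) ^ 2 * a ^ s + (c - x) * (x - a) * c ^ s) / (c - a) := by
          field_simp
  have hmain := intervalIntegral.integral_mono_on hac.le hint1 hint2 hmono
  refine hmain.trans_eq ?_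
  have heq : (fun x : ℝ => ((c - x) ^ 2 * a ^ s + (c - x) * (x - a) * c ^ s) / (c - a)) =
      fun x : ℝ => ((a ^ s - c ^ s) / (c - a)) * x ^ 2 +
        ((-(2*c) * a ^ s + (a + c) * c ^ s) / (c - a)) * x +
        ((c ^ 2 * a ^ s - a * c * c ^ s) / (c - a)) := by
    funext x; field_simp; ring
  rw [heq, integ_quad]
  field_simp
  ring

private lemma integ_bound_right (s : ℤ) (a c : ℝ) (ha : 0 < a) (hac : a < c) :
    ∫ x in a..c, (x - a) * x ^ s ≤ (c - a) ^ 2 * (a ^ s + 2 * c ^ s) / 6 := by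
  have hc : 0 < c := ha.trans hac
  have hca : (0:ℝ) < c - a := by linarith
  have hint1 : IntervalIntegrable (fun x : ℝ => (x - a) * x ^ s) volume a c := by
    apply ContinuousOn.intervalIntegrable
    rw [uIcc_of_le hac.le]
    exact (continuousOn_id.sub continuousOn_const).mul (zpow_contOn s a c ha)
  have hint2 : IntervalIntegrable
      (fun x : ℝ => ((x - a) * (c - x) * a ^ s + (x - a) ^ 2 * c ^ s) / (c - a)) volume a c := by
    apply Continuous.intervalIntegrable
    fun_prop
  have hmono : ∀ x ∈ Icc a c,
      (x - a) * x ^ s ≤ ((x - a) * (c - x) * a ^ s + (x - a) ^ 2 * c ^ s) / (c - a) := by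
    intro x hx
    have hcx : (0:ℝ) ≤ c - x := by linarith [hx.2]
    have hxa : (0:ℝ) ≤ x - a := by linarith [hx.1]
    have hsum : (c - x) / (c - a) + (x - a) / (c - a) = 1 := by
      rw [← add_div, show c - x + (x - a) = c - a by ring, div_self hca.ne']
    have key := (convexOn_zpow (𝕜 := ℝ) s).2 (mem_Ioi.mpr ha) (mem_Ioi.mpr hc)
      (by positivity) (by positivity) hsum
    have hxeq : ((c - x) / (c - a)) • a + ((x - a) / (c - a)) • c = x := by
      simp only [smul_eq_mul]
      field_simp
      ring
    rw [hxeq] at key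
    simp only [smul_eq_mul] at key
    calc (x - a) * x ^ s
        ≤ (x - a) * ((c - x) / (c - a) * a ^ s + (x - a) / (c - a) * c ^ s) :=
          mul_le_mul_of_nonneg_left key hxa
      _ = ((x - a) * (c - x) * a ^ s + (x - a) ^ 2 * c ^ s) / (c - a) := by
          field_simp
  have hmain := intervalIntegral.integral_mono_on hac.le hint1 hint2 hmono
  refine hmain.trans_eq ?_
  have heq : (fun x : ℝ => ((x - a) * (c - x) * a ^ s + (x - a) ^ 2 * c ^ s) / (c - a)) =
      fun x : ℝ => ((-(a ^ s) + c ^ s) / (c - a)) * x ^ 2 +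
        (((a + c) * a ^ s - 2 * a * c ^ s) / (c - a)) * x +
        ((-(a * c) * a ^ s + a ^ 2 * c ^ s) / (c - a)) := by
    funext x; field_simp; ring
  rw [heq, integ_quad]
  field_simp
  ring

private lemma rpow_step5 (q : ℝ) (hq : 1 < q) (m c : ℝ) (hm : 0 < m) (hc : 0 < c) (e : ℝ) :
    m ^ e / 2 + c ^ e ≤ (3/2) * ((2/3) ^ (1/q)) * (m ^ (q * e) / 2 + c ^ (q * e)) ^ (1/q) := by
  have hq0 : (0:ℝ) < q := by linarith
  have hle1 : 1/q ≤ 1 := by rw [div_le_one hq0]; linarith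
  have h1 : (m ^ (q * e)) ^ (1/q) = m ^ e := by
    rw [← Real.rpow_mul hm.le]; congr 1; field_simp
  have h2 : (c ^ (q * e)) ^ (1/q) = c ^ e := by
    rw [← Real.rpow_mul hc.le]; congr 1; field_simp
  have h := (Real.concaveOn_rpow (p := 1/q) (by positivity) hle1).2
    (mem_Ici.mpr (Real.rpow_nonneg hm.le (q*e))) (mem_Ici.mpr (Real.rpow_nonneg hc.le (q*e)))
    (by norm_num : (0:ℝ) ≤ 1/3) (by norm_num : (0:ℝ) ≤ 2/3) (by norm_num)
  simp only [smul_eq_mul, h1, h2] at h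
  have heq : (1/3) * m ^ (q*e) + (2/3) * c ^ (q*e) = (2/3) * (m ^ (q*e) / 2 + c ^ (q*e)) := by
    ring
  rw [heq, Real.mul_rpow (by norm_num) (by positivity)] at h
  nlinarith [Real.rpow_nonneg (show (0:ℝ) ≤ 2/3 by norm_num) (1/q),
    Real.rpow_nonneg (show (0:ℝ) ≤ m ^ (q*e) / 2 + c ^ (q*e) by positivity) (1/q)]
set_option maxHeartbeats 1000000 in
theorem stmt_19
    (a b : ℝ) (ha : 0 < a) (hab : a < b) (n : ℤ) (hn : 1 ≤ |n|) (hn1 : n ≠ -1)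
    (q : ℝ) (hq : 1 < q) :
    |(a ^ n + b ^ n) / 2 - (b ^ (n + 1) - a ^ (n + 1)) / (((n : ℝ) + 1) * (b - a))|
      ≤ |(n : ℝ)| * (b - a) * (2 : ℝ) ^ (1 / q - 3) * (3 : ℝ) ^ (-(1 / q)) *
          ((((a + b) / 2) ^ (q * ((n : ℝ) - 1)) / 2 + a ^ (q * ((n : ℝ) - 1))) ^ (1 / q)
            + (((a + b) / 2) ^ (q * ((n : ℝ) - 1)) / 2 + b ^ (q * ((n : ℝ) - 1))) ^ (1 / q)) := by
  have hb : 0 < b := ha.trans hab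
  have hba : (0:ℝ) < b - a := by linarith
  have hbane : b - a ≠ 0 := hba.ne'
  set m : ℝ := (a + b) / 2 with hm_def
  have hm : 0 < m := by rw [hm_def]; positivity
  have ham : a < m := by rw [hm_def]; linarith
  have hmb : m < b := by rw [hm_def]; linarith
  have hn0 : n ≠ 0 := by rintro rfl; simp at hn
  have hnR : ((n:ℝ)) ≠ 0 := Int.cast_ne_zero.mpr hn0
  have hn1R : ((n:ℝ)) + 1 ≠ 0 := by
    have h : ((n + 1 : ℤ) : ℝ) ≠ 0 := Int.cast_ne_zero.mpr (by omega)
    push_cast at h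
    exact h
  have hq0 : (0:ℝ) < q := by linarith
  have hnotmem : (0:ℝ) ∉ [[a, b]] := by
    rw [uIcc_of_le hab.le]
    rintro ⟨h1, -⟩
    linarith
  set g : ℝ → ℝ := fun x => (x - m) * ((n:ℝ) * x ^ (n - 1)) with hg_def
  have hgint : IntervalIntegrable g volume a b := by
    apply ContinuousOn.intervalIntegrable
    rw [uIcc_of_le hab.le, hg_def]
    exact (continuousOn_id.sub continuousOn_const).mul
      (continuousOn_const.mul (zpow_contOn _ a b ha))
  have hsub1 : [[a, m]] ⊆ [[a, b]] :=
    uIcc_subset_uIcc left_mem_uIcc (by rw [uIcc_of_le hab.le]; exact ⟨ham.le, hmb.le⟩)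
  have hsub2 : [[m, b]] ⊆ [[a, b]] :=
    uIcc_subset_uIcc (by rw [uIcc_of_le hab.le]; exact ⟨ham.le, hmb.le⟩) right_mem_uIcc
  have hgm : IntervalIntegrable g volume a m := hgint.mono_set hsub1
  have hgm2 : IntervalIntegrable g volume m b := hgint.mono_set hsub2
  -- explicit integrals
  have hInt_n : ∫ x in a..b, x ^ n = (b ^ (n+1) - a ^ (n+1)) / ((n:ℝ) + 1) := by
    rw [integral_zpow (Or.inr ⟨hn1, hnotmem⟩)]
  have hInt_n1 : ∫ x in a..b, x ^ (n - 1) = (b ^ n - a ^ n) / (n:ℝ) := by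
    rw [integral_zpow (Or.inr ⟨by omega, hnotmem⟩), show n - 1 + 1 = n from by ring]
    push_cast
    ring
  have hJ : ∫ x in a..b, g x =
      (n:ℝ) * ((b ^ (n+1) - a ^ (n+1)) / ((n:ℝ) + 1)) -
        ((n:ℝ) * m) * ((b ^ n - a ^ n) / (n:ℝ)) := by
    have hEq : EqOn g (fun x => (n:ℝ) * x ^ n - ((n:ℝ) * m) * x ^ (n - 1)) [[a, b]] := by
      intro x hx
      rw [uIcc_of_le hab.le] at hx
      have hx0 : x ≠ 0 := by
        have := hx.1; intro h; rw [h] at this; linarith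
      have hxn : x ^ (n - 1) * x = x ^ n := by
        rw [zpow_sub_one₀ hx0]
        field_simp
      simp only [hg_def]
      rw [← hxn]
      ring
    rw [intervalIntegral.integral_congr hEq]
    have i1 : IntervalIntegrable (fun x : ℝ => (n:ℝ) * x ^ n) volume a b := by
      apply ContinuousOn.intervalIntegrable
      rw [uIcc_of_le hab.le]
      exact continuousOn_const.mul (zpow_contOn _ a b ha)
    have i2 : IntervalIntegrable (fun x : ℝ => ((n:ℝ) * m) * x ^ (n - 1)) volume a b := by
      apply ContinuousOn.intervalIntegrable
      rw [uIcc_of_le hab.le]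
      exact continuousOn_const.mul (zpow_contOn _ a b ha)
    rw [intervalIntegral.integral_sub i1 i2, intervalIntegral.integral_const_mul,
      intervalIntegral.integral_const_mul, hInt_n, hInt_n1]
  have hId : (a ^ n + b ^ n) / 2 - (b ^ (n + 1) - a ^ (n + 1)) / (((n : ℝ) + 1) * (b - a))
      = (∫ x in a..b, g x) / (b - a) := by
    have hbp : b ^ (n + 1) = b ^ n * b := by rw [zpow_add_one₀ hb.ne']
    have hap : a ^ (n + 1) = a ^ n * a := by rw [zpow_add_one₀ ha.ne']
    rw [hJ, hbp, hap, hm_def]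
    field_simp
    ring
  -- bound the integral
  have habs : |∫ x in a..b, g x| ≤ ∫ x in a..b, |g x| :=
    intervalIntegral.abs_integral_le_integral_abs hab.le
  have hsplit : (∫ x in a..b, |g x|) = (∫ x in a..m, |g x|) + ∫ x in m..b, |g x| :=
    (intervalIntegral.integral_add_adjacent_intervals hgm.abs hgm2.abs).symm
  have hleft : (∫ x in a..m, |g x|) = |(n:ℝ)| * ∫ x in a..m, (m - x) * x ^ (n - 1) := by
    rw [← intervalIntegral.integral_const_mul]
    apply intervalIntegral.integral_congr
    intro x hx
    rw [uIcc_of_le ham.le] at hx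
    have hx0 : (0:ℝ) < x := lt_of_lt_of_le ha hx.1
    simp only [hg_def]
    rw [abs_mul, abs_mul, abs_of_nonpos (by linarith [hx.2] : x - m ≤ 0),
      abs_of_pos (zpow_pos hx0 _)]
    ring
  have hright : (∫ x in m..b, |g x|) = |(n:ℝ)| * ∫ x in m..b, (x - m) * x ^ (n - 1) := by
    rw [← intervalIntegral.integral_const_mul]
    apply intervalIntegral.integral_congr
    intro x hx
    rw [uIcc_of_le hmb.le] at hx
    have hx0 : (0:ℝ) < x := lt_of_lt_of_le hm hx.1
    simp only [hg_def]
    rw [abs_mul, abs_mul, abs_of_nonneg (by linarith [hx.1] : (0:ℝ) ≤ x - m),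
      abs_of_pos (zpow_pos hx0 _)]
    ring
  have hL := integ_bound_left (n - 1) a m ha ham
  have hR := integ_bound_right (n - 1) m b hm hmb
  have hJbound : |∫ x in a..b, g x| ≤
      |(n:ℝ)| * ((b - a) ^ 2 *
        ((m ^ (n - 1) / 2 + a ^ (n - 1)) + (m ^ (n - 1) / 2 + b ^ (n - 1))) / 12) := by
    have h2 : m - a = (b - a) / 2 := by rw [hm_def]; ring
    have h3 : b - m = (b - a) / 2 := by rw [hm_def]; ring
    calc |∫ x in a..b, g x| ≤ ∫ x in a..b, |g x| := habs
      _ = |(n:ℝ)| * (∫ x in a..m, (m - x) * x ^ (n - 1)) +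
          |(n:ℝ)| * ∫ x in m..b, (x - m) * x ^ (n - 1) := by rw [hsplit, hleft, hright]
      _ ≤ |(n:ℝ)| * ((m - a) ^ 2 * (2 * a ^ (n - 1) + m ^ (n - 1)) / 6) +
          |(n:ℝ)| * ((b - m) ^ 2 * (m ^ (n - 1) + 2 * b ^ (n - 1)) / 6) :=
        add_le_add (mul_le_mul_of_nonneg_left hL (abs_nonneg _))
          (mul_le_mul_of_nonneg_left hR (abs_nonneg _))
      _ = |(n:ℝ)| * ((b - a) ^ 2 *
          ((m ^ (n - 1) / 2 + a ^ (n - 1)) + (m ^ (n - 1) / 2 + b ^ (n - 1))) / 12) := by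
        rw [h2, h3]; ring
  -- zpow to rpow
  have hz : ∀ c : ℝ, 0 < c → c ^ ((n:ℝ) - 1) = c ^ (n - 1 : ℤ) := by
    intro c hc
    rw [show ((n:ℝ) - 1) = ((n - 1 : ℤ) : ℝ) by push_cast; ring, Real.rpow_intCast]
  have hstepa := rpow_step5 q hq m a hm ha ((n:ℝ) - 1)
  have hstepb := rpow_step5 q hq m b hm hb ((n:ℝ) - 1)
  rw [hz m hm, hz a ha] at hstepa
  rw [hz m hm, hz b hb] at hstepb
  -- the constant
  have h8 : (2:ℝ) ^ (3:ℝ) = 8 := by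
    rw [show (3:ℝ) = ((3:ℕ):ℝ) by norm_num, Real.rpow_natCast]
    norm_num
  have h3pos : (0:ℝ) < (3:ℝ) ^ (1/q) := Real.rpow_pos_of_pos (by norm_num) _
  have hconst : (2:ℝ) ^ (1/q - 3) * (3:ℝ) ^ (-(1/q)) = (1/12) * (3/2 * (2/3) ^ (1/q)) := by
    rw [Real.rpow_sub (by norm_num : (0:ℝ) < 2), h8, Real.rpow_neg (by norm_num : (0:ℝ) ≤ 3),
      Real.div_rpow (by norm_num : (0:ℝ) ≤ 2) (by norm_num : (0:ℝ) ≤ 3)]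
    field_simp
    ring
  -- assemble
  rw [hId, abs_div, abs_of_pos hba, div_le_iff₀ hba]
  set Ta : ℝ := (m ^ (q * ((n:ℝ) - 1)) / 2 + a ^ (q * ((n:ℝ) - 1))) ^ (1/q) with hTa
  set Tb : ℝ := (m ^ (q * ((n:ℝ) - 1)) / 2 + b ^ (q * ((n:ℝ) - 1))) ^ (1/q) with hTb
  calc |∫ x in a..b, g x| ≤
      |(n:ℝ)| * ((b - a) ^ 2 *
        ((m ^ (n - 1) / 2 + a ^ (n - 1)) + (m ^ (n - 1) / 2 + b ^ (n - 1))) / 12) := hJbound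
    _ ≤ |(n:ℝ)| * ((b - a) ^ 2 *
        ((3/2 * (2/3) ^ (1/q)) * Ta + (3/2 * (2/3) ^ (1/q)) * Tb) / 12) := by
      have hsum := add_le_add hstepa hstepb
      have h0 : (0:ℝ) ≤ |(n:ℝ)| * ((b - a) ^ 2 / 12) := by positivity
      nlinarith [h0, hsum]
    _ = |(n:ℝ)| * (b - a) * (2 : ℝ) ^ (1 / q - 3) * (3 : ℝ) ^ (-(1 / q)) * (Ta + Tb) * (b - a) := by
      linear_combination (-(|(n:ℝ)| * (b - a) ^ 2 * (Ta + Tb))) * hconst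
end
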